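/- Let f : X → ℝ ∪ {+∞} be proper with x̄ ∈ argmin f, and let γ > 0. Then x̄ is a sharp minimizer of f with modulus γ if and only if x̄ is a sharp minimizer of the biconjugate f** with modulus γ. -/

import Mathlib

/-- The Legendre–Fenchel conjugate `f*(ξ) = sup_x {⟨ξ,x⟩ − f x}`. -/
noncomputable def fenchelConj {X : Type*} [NormedAddCommGroup X] [NormedSpace ℝ X]
    (f : X → EReal) (ξ : X →L[ℝ] ℝ) : EReal :=
  ⨆ x : X, ((ξ x : ℝ) : EReal) - f x

/-- The biconjugate `f**(x) = sup_{ξ ∈ X*} {⟨ξ,x⟩ − f*(ξ)}`. -/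
noncomputable def fenchelBiconj {X : Type*} [NormedAddCommGroup X] [NormedSpace ℝ X]
    (f : X → EReal) (x : X) : EReal :=
  ⨆ ξ : X →L[ℝ] ℝ, ((ξ x : ℝ) : EReal) - fenchelConj f ξ

-- biconjugate is below f
lemma biconj_le {X : Type*} [NormedAddCommGroup X] [NormedSpace ℝ X]
    (f : X → EReal) (hbot : ∀ x, f x ≠ ⊥) (x : X) : fenchelBiconj f x ≤ f x := by
  refine iSup_le fun ξ => ?_
  by_cases htop : f x = ⊤
  · rw [htop]; exact le_top
  rw [EReal.sub_le_iff_le_add (Or.inr htop) (Or.inr (hbot x))]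
  have h1 : ((ξ x : ℝ) : EReal) - f x ≤ fenchelConj f ξ := le_iSup (fun y => ((ξ y : ℝ) : EReal) - f y) x
  calc ((ξ x : ℝ) : EReal) = f x + (((ξ x : ℝ) : EReal) - f x) := by
        lift f x to ℝ using ⟨htop, hbot x⟩ with s
        rw [← EReal.coe_sub, ← EReal.coe_add]; norm_num
    _ ≤ f x + fenchelConj f ξ := add_le_add_right h1 _

-- value of biconjugate at the minimizer
lemma biconj_at_min {X : Type*} [NormedAddCommGroup X] [NormedSpace ℝ X]
    (f : X → EReal) (hbot : ∀ x, f x ≠ ⊥) (xbar : X) (r : ℝ) (hr : f xbar = (r : EReal))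
    (hmin : ∀ y : X, f xbar ≤ f y) :
    fenchelBiconj f xbar = f xbar := by
  refine le_antisymm (biconj_le f hbot xbar) ?_
  have hconj0 : fenchelConj f (0 : X →L[ℝ] ℝ) ≤ ((-r : ℝ) : EReal) := by
    refine iSup_le fun y => ?_
    have : ((-r : ℝ) : EReal) = (((0 : X →L[ℝ] ℝ) y : ℝ) : EReal) - (r : EReal) := by
      simp [EReal.coe_sub, sub_eq_add_neg]
    rw [this]
    exact EReal.sub_le_sub le_rfl (hr ▸ hmin y)
  have h1 : (((0 : X →L[ℝ] ℝ) xbar : ℝ) : EReal) - fenchelConj f (0 : X →L[ℝ] ℝ)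
      ≤ fenchelBiconj f xbar :=
    le_iSup (fun ξ : X →L[ℝ] ℝ => ((ξ xbar : ℝ) : EReal) - fenchelConj f ξ) 0
  refine le_trans ?_ h1
  have h2 : (((0 : X →L[ℝ] ℝ) xbar : ℝ) : EReal) - ((-r : ℝ) : EReal)
      ≤ (((0 : X →L[ℝ] ℝ) xbar : ℝ) : EReal) - fenchelConj f (0 : X →L[ℝ] ℝ) :=
    EReal.sub_le_sub le_rfl hconj0
  refine le_trans ?_ h2
  rw [hr, ← EReal.coe_sub]
  norm_num


/-- sharp minimality with modulus γ is preserved under biconjugation. -/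
theorem sharp_min_iff_sharp_min_biconj
    {X : Type*} [NormedAddCommGroup X] [NormedSpace ℝ X]
    (f : X → EReal) (hbot : ∀ x, f x ≠ ⊥) (hproper : ∃ x, f x ≠ ⊤)
    (xbar : X) (hmin : ∀ y : X, f xbar ≤ f y) (γ : ℝ) (hγ : 0 < γ) :
    (∀ x : X, f xbar + ((γ * ‖x - xbar‖ : ℝ) : EReal) ≤ f x)
      ↔ (∀ x : X, fenchelBiconj f xbar + ((γ * ‖x - xbar‖ : ℝ) : EReal)
            ≤ fenchelBiconj f x) := by
  -- f xbar is a real number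
  obtain ⟨x0, hx0⟩ := hproper
  have hrtop : f xbar ≠ ⊤ := fun h => hx0 (top_le_iff.mp (h ▸ hmin x0))
  obtain ⟨r, hr⟩ : ∃ r : ℝ, f xbar = (r : EReal) := by
    lift f xbar to ℝ using ⟨hrtop, hbot xbar⟩ with s
    exact ⟨s, rfl⟩
  have hA := biconj_at_min f hbot xbar r hr hmin
  constructor
  · intro hsharp x
    rw [hA, hr, ← EReal.coe_add]
    by_cases hx : x = xbar
    · subst hx
      simp only [sub_self, norm_zero, mul_zero, add_zero]
      rw [← hr, ← hA]
    -- choose a dual vector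
    obtain ⟨ξ₀, hξ₀n, hξ₀v⟩ := exists_dual_vector ℝ (x - xbar) (norm_ne_zero_iff.mpr (sub_ne_zero.mpr hx))
    set ξ : X →L[ℝ] ℝ := γ • ξ₀ with hξ
    have hξn : ‖ξ‖ = γ := by
      rw [hξ, norm_smul γ ξ₀, hξ₀n, Real.norm_eq_abs, abs_of_pos hγ, mul_one]
    have hξv : ξ (x - xbar) = γ * ‖x - xbar‖ := by
      rw [hξ]
      simp only [ContinuousLinearMap.smul_apply, smul_eq_mul]
      rw [hξ₀v]
      norm_num
    -- bound the conjugate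
    have hconj : fenchelConj f ξ ≤ ((ξ xbar - r : ℝ) : EReal) := by
      refine iSup_le fun y => ?_
      have hc : ((ξ y - (r + γ * ‖y - xbar‖) : ℝ) : EReal) ≤ ((ξ xbar - r : ℝ) : EReal) := by
        rw [EReal.coe_le_coe_iff]
        have hb : ξ y - ξ xbar ≤ γ * ‖y - xbar‖ := by
          have := (ξ.le_opNorm (y - xbar))
          have h2 : ξ (y - xbar) ≤ γ * ‖y - xbar‖ := by
            calc ξ (y - xbar) ≤ |ξ (y - xbar)| := le_abs_self _
              _ ≤ ‖ξ‖ * ‖y - xbar‖ := this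
              _ = γ * ‖y - xbar‖ := by rw [hξn]
          rwa [map_sub] at h2
        linarith
      refine le_trans ?_ hc
      have hfy : ((r + γ * ‖y - xbar‖ : ℝ) : EReal) ≤ f y := by
        have := hsharp y
        rwa [hr, ← EReal.coe_add] at this
      calc ((ξ y : ℝ) : EReal) - f y
          ≤ ((ξ y : ℝ) : EReal) - ((r + γ * ‖y - xbar‖ : ℝ) : EReal) :=
            EReal.sub_le_sub le_rfl hfy
        _ = ((ξ y - (r + γ * ‖y - xbar‖) : ℝ) : EReal) := by rw [← EReal.coe_sub]
    -- lower bound the biconjugate at x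
    have h1 : ((ξ x : ℝ) : EReal) - fenchelConj f ξ ≤ fenchelBiconj f x :=
      le_iSup (fun η : X →L[ℝ] ℝ => ((η x : ℝ) : EReal) - fenchelConj f η) ξ
    refine le_trans (le_trans ?_ (EReal.sub_le_sub le_rfl hconj)) h1
    rw [← EReal.coe_sub, EReal.coe_le_coe_iff]
    have : ξ x - ξ xbar = γ * ‖x - xbar‖ := by rw [← map_sub, hξv]
    linarith
  · intro hsharp x
    have h1 : f xbar + ((γ * ‖x - xbar‖ : ℝ) : EReal)
        = fenchelBiconj f xbar + ((γ * ‖x - xbar‖ : ℝ) : EReal) := by rw [hA]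
    rw [h1]
    exact le_trans (hsharp x) (biconj_le f hbot x)
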